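/- Let (P,σ) be a signed path on vertices x, z, y with edges xz and zy, and let L be a list assignment with L(z) = C, L(x) = {c_x} and L(y) = {c_y}. If it is not the case that (1) c_x and c_y lie in the same layer but on different sides and σ(xz)σ(zy) = +1, and not the case that (2) c_x and c_y lie in the same layer and on the same side and σ(xz)σ(zy) = −1, then (P,σ) admits an L-coloring. -/

import Mathlib

open SimpleGraph

/-- The color set `C`: the vertex set of `DSG(K_6, M)`, encoding `x^+` as `(x, 1)` and `x^−`
as `(x, -1)` for `x` a vertex of `K_6`. -/
abbrev ColorC : Type := Fin 6 × ℤˣ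

/-- The perfect matching on the vertices of `K_6`: `0↔1, 2↔3, 4↔5` (i.e. `12, 34, 56`). -/
def pairFn : Fin 6 → Fin 6 := ![1, 0, 3, 2, 5, 4]

/-- The pair of a color: the matched `K_6`-vertex on the same side. -/
def pairC (c : ColorC) : ColorC := (pairFn c.1, c.2)

/-- Two colors lie in the same layer iff their `K_6`-vertices lie in the same matched pair. -/
def SameLayer (c d : ColorC) : Prop := (c.1 : ℕ) / 2 = (d.1 : ℕ) / 2

/-- The underlying graph of `DSG(K_6, M)`: `(x, s)` is adjacent to `(y, t)` iff `x ≠ y`. -/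
def DSG6 : SimpleGraph ColorC where
  Adj a b := a.1 ≠ b.1
  symm := ⟨fun _ _ h => Ne.symm h⟩
  loopless := ⟨fun _ h => h rfl⟩

/-- The sign of the `DSG(K_6, M)`-edge between colors `c` and `d`: it is
`c.2 * d.2 * π(c.1 d.1)` where `π` is the signature of `(K_6, M)` (negative exactly on the
matching `12, 34, 56`). -/
def dsgSign (c d : ColorC) : ℤˣ :=
  c.2 * d.2 * (if (c.1 : ℕ) / 2 = (d.1 : ℕ) / 2 then -1 else 1)

/-- A set of colors is paired if for all but at most one of its elements, the pair of the
element also lies in the set. -/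
def IsPaired (L : Set ColorC) : Prop := {c | c ∈ L ∧ pairC c ∉ L}.Subsingleton

/-- A set of colors is layered if it is paired and no three of its colors lie in a common
layer. -/
def IsLayered (L : Set ColorC) : Prop :=
  IsPaired L ∧ ∀ j : ℕ, {c | c ∈ L ∧ (c.1 : ℕ) / 2 = j}.ncard ≤ 2

/-- A set of colors is one-sided if all its colors lie on the same side. -/
def IsOneSided (L : Set ColorC) : Prop :=
  (∀ c ∈ L, c.2 = 1) ∨ (∀ c ∈ L, c.2 = -1)

/-- A neighbored `(2k+1)`-set: a layered set of size `2k+1` consisting of `k` pairs all on one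
side together with a single color on the other side. -/
def IsNeighbored (k : ℕ) (L : Set ColorC) : Prop :=
  IsLayered L ∧ L.ncard = 2 * k + 1 ∧
    ∃ α : ℤˣ, ∃ c ∈ L, c.2 = -α ∧ ∀ d ∈ L, d ≠ c → d.2 = α ∧ pairC d ∈ L

/-- An `L`-coloring of a signed graph `(G, σ)` with list assignment `L`: an edge-sign
preserving homomorphism `φ` of `(G, σ)` to `DSG(K_6, M)` with `φ v ∈ L v` for all `v`. -/
def IsLColoring {V : Type*} (G : SimpleGraph V) (σ : Sym2 V → ℤˣ)
    (L : V → Set ColorC) (φ : V → ColorC) : Prop :=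
  (∀ v, φ v ∈ L v) ∧
  ∀ u v : V, G.Adj u v → (φ u).1 ≠ (φ v).1 ∧ dsgSign (φ u) (φ v) = σ s(u, v)

/-- Observation 4.3: for a signed path `x z y` with `L(z) = C`, `L(x) = {c_x}`,
`L(y) = {c_y}`, an `L`-coloring exists unless `c_x, c_y` are in the same layer on different
sides and the path is positive, or in the same layer on the same side and the path is
negative. -/
lemma dsgSign_comm (c d : ColorC) : dsgSign c d = dsgSign d c := by
  unfold dsgSign
  rw [if_congr eq_comm rfl rfl, mul_comm c.2 d.2]

lemma mid_works (σ : Sym2 (Fin 3) → ℤˣ) (cx cy c : ColorC)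
    (hx : c.1 ≠ cx.1) (hy : c.1 ≠ cy.1)
    (e1 : dsgSign cx c = σ s(0, 1)) (e2 : dsgSign c cy = σ s(1, 2)) :
    ∃ φ, IsLColoring (pathGraph 3) σ ![{cx}, Set.univ, {cy}] φ := by
  refine ⟨![cx, c, cy], fun v => by fin_cases v <;> simp, fun u v huv => ?_⟩
  rw [pathGraph_adj] at huv
  have hs10 : (s(1, 0) : Sym2 (Fin 3)) = s(0, 1) := Sym2.eq_swap
  have hs21 : (s(2, 1) : Sym2 (Fin 3)) = s(1, 2) := Sym2.eq_swap
  fin_cases u <;> fin_cases v <;>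
    simp_all [dsgSign_comm c cx, dsgSign_comm cy c, Ne.symm hx, Ne.symm hy, hx, hy] <;>
    exact congrArg σ Sym2.eq_swap

lemma free_layer : ∀ a b : Fin 6, ∃ m : Fin 6,
    (a : ℕ) / 2 ≠ (m : ℕ) / 2 ∧ (b : ℕ) / 2 ≠ (m : ℕ) / 2 := by decide

lemma pairFn_facts : ∀ a : Fin 6, pairFn a ≠ a ∧ ((pairFn a : Fin 6) : ℕ) / 2 = (a : ℕ) / 2 := by
  decide


theorem path3_LColorable (σ : Sym2 (Fin 3) → ℤˣ) (cx cy : ColorC)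
    (h1 : ¬ (SameLayer cx cy ∧ cx.2 ≠ cy.2 ∧ σ s(0, 1) * σ s(1, 2) = 1))
    (h2 : ¬ (SameLayer cx cy ∧ cx.2 = cy.2 ∧ σ s(0, 1) * σ s(1, 2) = -1)) :
    ∃ φ, IsLColoring (pathGraph 3) σ ![{cx}, Set.univ, {cy}] φ := by
  by_cases hp : σ s(0, 1) * σ s(1, 2) = cx.2 * cy.2
  · obtain ⟨m, hm1, hm2⟩ := free_layer cx.1 cy.1
    apply mid_works σ cx cy (m, cx.2 * σ s(0, 1))
    · exact fun h => hm1 (by rw [show m = cx.1 from h])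
    · exact fun h => hm2 (by rw [show m = cy.1 from h])
    · show cx.2 * (cx.2 * σ s(0, 1)) * _ = _
      rw [if_neg hm1, mul_one, ← mul_assoc, Int.units_mul_self, one_mul]
    · show cx.2 * σ s(0, 1) * cy.2 * _ = _
      rw [if_neg (fun h => hm2 h.symm), mul_one]
      rcases Int.units_eq_one_or (σ s(0, 1)) with e | e <;>
        rcases Int.units_eq_one_or (σ s(1, 2)) with f | f <;>
        rcases Int.units_eq_one_or cx.2 with g | g <;>
        rcases Int.units_eq_one_or cy.2 with k | k <;>
        rw [e, f, g, k] at hp ⊢ <;>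
        first | rfl | decide | exact absurd hp (by decide)
  · have hp' : σ s(0, 1) * σ s(1, 2) = -(cx.2 * cy.2) := by
      rcases Int.units_eq_one_or (σ s(0, 1)) with e | e <;>
        rcases Int.units_eq_one_or (σ s(1, 2)) with f | f <;>
        rcases Int.units_eq_one_or cx.2 with g | g <;>
        rcases Int.units_eq_one_or cy.2 with k | k <;>
        rw [e, f, g, k] at hp ⊢ <;>
        first | rfl | decide | exact absurd rfl hp
    have hns : ¬ SameLayer cx cy := by
      intro hSL
      rcases Int.units_eq_one_or (σ s(0, 1) * σ s(1, 2)) with e | e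
      · exact h1 ⟨hSL, fun hh => hp (by rw [e, hh, Int.units_mul_self]), e⟩
      · refine h2 ⟨hSL, ?_, e⟩
        by_contra hh
        apply hp
        rw [e]
        rcases Int.units_eq_one_or cx.2 with g | g <;>
          rcases Int.units_eq_one_or cy.2 with k | k <;> simp_all
    obtain ⟨hma, hmb⟩ := pairFn_facts cx.1
    unfold SameLayer at hns
    apply mid_works σ cx cy (pairFn cx.1, -(cx.2 * σ s(0, 1)))
    · exact hma
    · exact fun h => hns (by rw [← show pairFn cx.1 = cy.1 from h]; exact hmb.symm)
    · show cx.2 * -(cx.2 * σ s(0, 1)) * _ = _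
      rw [if_pos hmb.symm]
      rcases Int.units_eq_one_or (σ s(0, 1)) with e | e <;>
        rcases Int.units_eq_one_or cx.2 with g | g <;> rw [e, g] <;> decide
    · show -(cx.2 * σ s(0, 1)) * cy.2 * _ = _
      rw [if_neg (fun h => hns (hmb.symm.trans h)), mul_one]
      rcases Int.units_eq_one_or (σ s(0, 1)) with e | e <;>
        rcases Int.units_eq_one_or (σ s(1, 2)) with f | f <;>
        rcases Int.units_eq_one_or cx.2 with g | g <;>
        rcases Int.units_eq_one_or cy.2 with k | k <;>
        rw [e, f, g, k] at hp' ⊢ <;>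
        first | rfl | decide | exact absurd hp' (by decide)
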